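/- arXiv:2003.02243 — 5 statements merged into one kernel-verified Lean document; each statement's English description precedes it below -/
import Mathlib

section
/- Let c > 0. Let λ be a Borel measure on ℝ^{n+2} that is invariant under g_t for every t ∈ ℝ, is finite on compact sets, and satisfies λ(F_{1,c}) < ∞. Let Λ ⊆ 𝓛 be a countable set whose intersection with every compact subset of ℝ^{n+2} is finite. If for every c' ∈ (0, c] one has #(F_{T,c'} ∩ Λ)/T → λ(F_{1,c'}) as T → ∞, then #(E_{T,c} ∩ Λ)/T → λ(F_{1,c}) as T → ∞. -/
noncomputable section

open MeasureTheory Metric Filter Topology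
open scoped ENNReal

/-- The index of the coordinate `x_{n+2}` (0-indexed: `n+1`). -/
def lastC (n : ℕ) : Fin (n + 2) := Fin.last (n + 1)

/-- The index of the coordinate `x_{n+1}` (0-indexed: `n`). -/
def sndC (n : ℕ) : Fin (n + 2) := ⟨n, by omega⟩

/-- The quadratic form `Q(x) = x_1² + ⋯ + x_{n+1}² − x_{n+2}²`. -/
def Qf (n : ℕ) (x : EuclideanSpace ℝ (Fin (n + 2))) : ℝ :=
  (∑ i : Fin (n + 1), x (Fin.castSucc i) ^ 2) - x (lastC n) ^ 2

/-- The positive light cone. -/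
def lightCone (n : ℕ) : Set (EuclideanSpace ℝ (Fin (n + 2))) :=
  {x | Qf n x = 0 ∧ 0 ≤ x (lastC n)}

/-- `Λ₀`: the intersection of the light cone with `ℤ^{n+1} × ℤ_{>0}`. -/
def Lat0 (n : ℕ) : Set (EuclideanSpace ℝ (Fin (n + 2))) :=
  {x | x ∈ lightCone n ∧ (∀ i, ∃ m : ℤ, x i = (m : ℝ)) ∧ 0 < x (lastC n)}

/-- The set `F_{T,c}`. -/
def Fset (n : ℕ) (T c : ℝ) : Set (EuclideanSpace ℝ (Fin (n + 2))) :=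
  {x | x ∈ lightCone n ∧ x (lastC n) ^ 2 - x (sndC n) ^ 2 < c ^ 2 ∧
    1 ≤ x (sndC n) + x (lastC n) ∧ x (sndC n) + x (lastC n) < Real.exp T}

/-- The set `E_{T,c}`. -/
def Eset (n : ℕ) (T c : ℝ) : Set (EuclideanSpace ℝ (Fin (n + 2))) :=
  {x | x ∈ lightCone n ∧ 2 * x (lastC n) * (x (lastC n) - x (sndC n)) < c ^ 2 ∧
    1 ≤ x (lastC n) ∧ x (lastC n) < Real.cosh T}

/-- The first `n+1` coordinates of a point of `ℝ^{n+2}`. -/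
def firstPart (n : ℕ) (x : EuclideanSpace ℝ (Fin (n + 2))) : EuclideanSpace ℝ (Fin (n + 1)) :=
  WithLp.toLp 2 (fun i => x (Fin.castSucc i))

/-- The one-parameter diagonal flow `g_t`. -/
def gmap (n : ℕ) (t : ℝ) (x : EuclideanSpace ℝ (Fin (n + 2))) :
    EuclideanSpace ℝ (Fin (n + 2)) :=
  WithLp.toLp 2 fun i =>
    if i = sndC n then Real.cosh t * x (sndC n) - Real.sinh t * x (lastC n)
    else if i = lastC n then - Real.sinh t * x (sndC n) + Real.cosh t * x (lastC n)
    else x i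

/-! ### Auxiliary lemmas -/

lemma cone_abs {n : ℕ} {x : EuclideanSpace ℝ (Fin (n + 2))} (hx : x ∈ lightCone n) :
    |x (sndC n)| ≤ x (lastC n) := by
  obtain ⟨hq, hpos⟩ := hx
  have hmem : x (sndC n) ^ 2 ≤ ∑ i : Fin (n + 1), x (Fin.castSucc i) ^ 2 := by
    have h := Finset.single_le_sum (f := fun i : Fin (n + 1) => x (Fin.castSucc i) ^ 2)
      (fun i _ => sq_nonneg _) (Finset.mem_univ (⟨n, by omega⟩ : Fin (n + 1)))
    simp only at h
    have he : (⟨n, by omega⟩ : Fin (n + 1)).castSucc = sndC n := by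
      apply Fin.ext; simp [sndC]
    rwa [he] at h
  have h2 : x (sndC n) ^ 2 ≤ x (lastC n) ^ 2 := by
    unfold Qf at hq; linarith
  rcases abs_cases (x (sndC n)) with ⟨h1, _⟩ | ⟨h1, _⟩ <;> nlinarith

lemma cone_norm_sq {n : ℕ} {x : EuclideanSpace ℝ (Fin (n + 2))} (hx : x ∈ lightCone n) :
    ‖x‖ ^ 2 = 2 * x (lastC n) ^ 2 := by
  obtain ⟨hq, hpos⟩ := hx
  have h1 : ‖x‖ = Real.sqrt (∑ i, x i ^ 2) := by
    rw [EuclideanSpace.norm_eq]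
    congr 1
    exact Finset.sum_congr rfl fun i _ => by rw [Real.norm_eq_abs, sq_abs]
  have h2 : (∑ i, x i ^ 2) = (∑ i : Fin (n + 1), x (Fin.castSucc i) ^ 2) + x (lastC n) ^ 2 := by
    rw [Fin.sum_univ_castSucc]; rfl
  have h3 : (0:ℝ) ≤ ∑ i, x i ^ 2 := Finset.sum_nonneg fun i _ => sq_nonneg _
  rw [h1, Real.sq_sqrt h3, h2]
  unfold Qf at hq; linarith

lemma finite_slab {n : ℕ} {Λ : Set (EuclideanSpace ℝ (Fin (n + 2)))}
    (hΛL : Λ ⊆ lightCone n)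
    (hdisc : ∀ K : Set (EuclideanSpace ℝ (Fin (n + 2))), IsCompact K → (Λ ∩ K).Finite)
    (M : ℝ) : ({x ∈ Λ | x (lastC n) ≤ M}).Finite := by
  refine (hdisc (Metric.closedBall 0 (Real.sqrt (2 * M ^ 2)))
    (isCompact_closedBall _ _)).subset ?_
  rintro x ⟨hxΛ, hxM⟩
  refine ⟨hxΛ, ?_⟩
  have hx := hΛL hxΛ
  have h1 := cone_norm_sq hx
  have hpos := hx.2
  have hnn : (0:ℝ) ≤ 2 * M ^ 2 := by positivity
  have hs := Real.sq_sqrt hnn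
  have hs0 := Real.sqrt_nonneg (2 * M ^ 2)
  simp only [Metric.mem_closedBall, dist_zero_right]
  nlinarith [norm_nonneg x]

lemma Fset_mono_c {n : ℕ} {T c₁ c₂ : ℝ} (h0 : 0 ≤ c₁) (h : c₁ ≤ c₂) :
    Fset n T c₁ ⊆ Fset n T c₂ := by
  rintro x ⟨hL, h1, h2, h3⟩
  exact ⟨hL, lt_of_lt_of_le h1 (by nlinarith), h2, h3⟩

lemma up_arith {c T a b : ℝ} (hc : 0 < c) (hT : 0 ≤ T)
    (ha1 : a ≤ b) (ha2 : -b ≤ a)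
    (h1 : 2 * b * (b - a) < c ^ 2) (h2 : 1 ≤ b) (h3 : b < Real.cosh T) :
    (b ^ 2 - a ^ 2 < c ^ 2 ∧ 1 ≤ a + b ∧ a + b < Real.exp (T + Real.log 2)) ∨
      b ≤ (1 + c) / 2 := by
  by_cases hs : 1 ≤ a + b
  · left
    refine ⟨by nlinarith [sq_nonneg (b - a)], hs, ?_⟩
    have hexp : Real.exp (T + Real.log 2) = Real.exp T * 2 := by
      rw [Real.exp_add, Real.exp_log two_pos]
    have hcosh : Real.cosh T = (Real.exp T + Real.exp (-T)) / 2 := Real.cosh_eq T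
    have h4 : Real.exp (-T) ≤ 1 := by
      rw [← Real.exp_zero]; exact Real.exp_le_exp.2 (by linarith)
    have h5 : 1 ≤ Real.exp T := by
      rw [← Real.exp_zero]; exact Real.exp_le_exp.2 hT
    rw [hexp]
    rw [hcosh] at h3
    linarith
  · right
    push_neg at hs
    have hb0 : 0 < b := by linarith
    have hba : b - a < c := by
      nlinarith [mul_nonneg (by linarith : (0:ℝ) ≤ b - a) (by linarith : (0:ℝ) ≤ a + b)]
    linarith

set_option maxHeartbeats 1000000 in
lemma low_arith {c c' T a b : ℝ} (hc' : 0 < c') (hcc : c' < c)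
    (hT : max 1 (Real.log (c' ^ 2 / (1 - Real.exp (-1)))) ≤ T)
    (ha1 : a ≤ b) (ha2 : -b ≤ a)
    (h1 : b ^ 2 - a ^ 2 < c' ^ 2) (h2 : 1 ≤ a + b) (h3 : a + b < Real.exp (T - 1)) :
    (2 * b * (b - a) < c ^ 2 ∧ 1 ≤ b ∧ b < Real.cosh T) ∨
      b ≤ (max 2 (1 + c' ^ 4 / (c ^ 2 - c' ^ 2)) + c' ^ 2) / 2 := by
  obtain ⟨R, hRdef⟩ : ∃ R : ℝ, R = max 2 (1 + c' ^ 4 / (c ^ 2 - c' ^ 2)) := ⟨_, rfl⟩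
  rw [← hRdef]
  have hu : 0 ≤ b - a := by linarith
  have huc : b - a < c' ^ 2 := by
    nlinarith [mul_nonneg hu (by linarith : (0:ℝ) ≤ a + b - 1)]
  by_cases hbig : R < a + b
  · left
    have hd : 0 < c ^ 2 - c' ^ 2 := by nlinarith
    have hR2 : 2 ≤ R := hRdef ▸ le_max_left _ _
    have hR1 : 1 + c' ^ 4 / (c ^ 2 - c' ^ 2) ≤ R := hRdef ▸ le_max_right _ _
    have h0t : 0 ≤ c' ^ 4 / (c ^ 2 - c' ^ 2) := by positivity
    have heq : c' ^ 4 / (c ^ 2 - c' ^ 2) * (c ^ 2 - c' ^ 2) = c' ^ 4 := by field_simp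
    have hRd : c' ^ 4 ≤ R ^ 2 * (c ^ 2 - c' ^ 2) := by
      nlinarith [mul_le_mul_of_nonneg_right hR1 hd.le,
        mul_nonneg (mul_nonneg (by linarith : (0:ℝ) ≤ R) (by linarith : (0:ℝ) ≤ R - 1)) hd.le]
    have huR : (b - a) * R < c' ^ 2 := by
      nlinarith [mul_le_mul_of_nonneg_left hbig.le hu]
    have hRpos : (0:ℝ) < R := by linarith
    have hsq : ((b - a) * R) ^ 2 < c' ^ 4 := by
      have h := mul_lt_mul' huR.le huR (mul_nonneg hu hRpos.le) (by positivity)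
      nlinarith [h]
    have hu2 : (b - a) ^ 2 ≤ c ^ 2 - c' ^ 2 := by
      have h5 : R ^ 2 * (b - a) ^ 2 < R ^ 2 * (c ^ 2 - c' ^ 2) := by nlinarith [hsq, hRd]
      have hR2pos : (0:ℝ) < R ^ 2 := by positivity
      exact (lt_of_mul_lt_mul_left h5 hR2pos.le).le
    refine ⟨by nlinarith [h1, hu2], by linarith, ?_⟩
    have hT1 : 1 ≤ T := le_trans (le_max_left _ _) hT
    have he1 : Real.exp (-1) < 1 := by
      rw [← Real.exp_zero]; exact Real.exp_lt_exp.2 (by norm_num)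
    have hpos : 0 < c' ^ 2 / (1 - Real.exp (-1)) := div_pos (by positivity) (by linarith)
    have hlog : Real.log (c' ^ 2 / (1 - Real.exp (-1))) ≤ T := le_trans (le_max_right _ _) hT
    have hexpT : c' ^ 2 / (1 - Real.exp (-1)) ≤ Real.exp T := by
      rw [← Real.exp_log hpos]; exact Real.exp_le_exp.2 hlog
    have hkey : Real.exp (T - 1) + c' ^ 2 ≤ Real.exp T := by
      have hprod : Real.exp (T - 1) = Real.exp T * Real.exp (-1) := by
        rw [← Real.exp_add]; ring_nf
      have hmul := (div_le_iff₀ (by linarith : (0:ℝ) < 1 - Real.exp (-1))).1 hexpT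
      nlinarith [hprod]
    have hcosh : Real.cosh T = (Real.exp T + Real.exp (-T)) / 2 := Real.cosh_eq T
    have hexpneg : 0 < Real.exp (-T) := Real.exp_pos _
    rw [hcosh]
    linarith
  · right
    push_neg at hbig
    linarith

lemma up_incl {n : ℕ} {c : ℝ} (hc : 0 < c) (Λ : Set (EuclideanSpace ℝ (Fin (n + 2))))
    {T : ℝ} (hT : 0 ≤ T) :
    Eset n T c ∩ Λ ⊆ (Fset n (T + Real.log 2) c ∩ Λ) ∪
      {x ∈ Λ | x (lastC n) ≤ (1 + c) / 2} := by
  rintro x ⟨⟨hxL, h1, h2, h3⟩, hxΛ⟩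
  have habs := abs_le.1 (cone_abs hxL)
  rcases up_arith hc hT habs.2 habs.1 h1 h2 h3 with ⟨g1, g2, g3⟩ | g
  · exact Or.inl ⟨⟨hxL, g1, g2, g3⟩, hxΛ⟩
  · exact Or.inr ⟨hxΛ, g⟩

lemma low_incl {n : ℕ} {c c' : ℝ} (hc' : 0 < c') (hcc : c' < c)
    (Λ : Set (EuclideanSpace ℝ (Fin (n + 2))))
    {T : ℝ} (hT : max 1 (Real.log (c' ^ 2 / (1 - Real.exp (-1)))) ≤ T) :
    Fset n (T - 1) c' ∩ Λ ⊆ (Eset n T c ∩ Λ) ∪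
      {x ∈ Λ | x (lastC n) ≤ (max 2 (1 + c' ^ 4 / (c ^ 2 - c' ^ 2)) + c' ^ 2) / 2} := by
  rintro x ⟨⟨hxL, h1, h2, h3⟩, hxΛ⟩
  have habs := abs_le.1 (cone_abs hxL)
  rcases low_arith hc' hcc hT habs.2 habs.1 h1 h2 h3 with ⟨g1, g2, g3⟩ | g
  · exact Or.inl ⟨⟨hxL, g1, g2, g3⟩, hxΛ⟩
  · exact Or.inr ⟨hxΛ, g⟩

lemma Ffin {n : ℕ} {Λ : Set (EuclideanSpace ℝ (Fin (n + 2)))}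
    (hΛL : Λ ⊆ lightCone n)
    (hdisc : ∀ K : Set (EuclideanSpace ℝ (Fin (n + 2))), IsCompact K → (Λ ∩ K).Finite)
    (T c' : ℝ) : (Fset n T c' ∩ Λ).Finite := by
  refine (finite_slab hΛL hdisc ((Real.exp T + c' ^ 2) / 2)).subset ?_
  rintro x ⟨⟨hxL, h1, h2, h3⟩, hxΛ⟩
  refine ⟨hxΛ, ?_⟩
  have habs := abs_le.1 (cone_abs hxL)
  have hu : 0 ≤ x (lastC n) - x (sndC n) := by linarith [habs.2]
  have huc : x (lastC n) - x (sndC n) < c' ^ 2 := by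
    nlinarith [mul_nonneg hu (by linarith : (0:ℝ) ≤ x (sndC n) + x (lastC n) - 1)]
  linarith

lemma Efin {n : ℕ} {Λ : Set (EuclideanSpace ℝ (Fin (n + 2)))}
    (hΛL : Λ ⊆ lightCone n)
    (hdisc : ∀ K : Set (EuclideanSpace ℝ (Fin (n + 2))), IsCompact K → (Λ ∩ K).Finite)
    (T c : ℝ) : (Eset n T c ∩ Λ).Finite := by
  refine (finite_slab hΛL hdisc (Real.cosh T)).subset ?_
  rintro x ⟨⟨hxL, h1, h2, h3⟩, hxΛ⟩
  exact ⟨hxΛ, h3.le⟩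

/-- **Corollary 2.7**: if the lattice point count in `F_{T,c'}` has the expected
asymptotics for every `c' ≤ c`, then so does the count in `E_{T,c}`. -/
theorem Eset_asymptotics_of_Fset_asymptotics (n : ℕ) (hn : 1 ≤ n) (c : ℝ) (hc : 0 < c)
    (lam : Measure (EuclideanSpace ℝ (Fin (n + 2))))
    (hinv : ∀ t : ℝ, Measure.map (gmap n t) lam = lam)
    (hfc : IsFiniteMeasureOnCompacts lam)
    (hfin : lam (Fset n 1 c) < ⊤)
    (Λ : Set (EuclideanSpace ℝ (Fin (n + 2)))) (hΛc : Λ.Countable)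
    (hΛL : Λ ⊆ lightCone n)
    (hdisc : ∀ K : Set (EuclideanSpace ℝ (Fin (n + 2))), IsCompact K → (Λ ∩ K).Finite)
    (hF : ∀ c' : ℝ, 0 < c' → c' ≤ c →
      Tendsto (fun T : ℝ => ((Fset n T c' ∩ Λ).ncard : ℝ) / T) atTop
        (𝓝 (lam (Fset n 1 c')).toReal)) :
    Tendsto (fun T : ℝ => ((Eset n T c ∩ Λ).ncard : ℝ) / T) atTop
      (𝓝 (lam (Fset n 1 c)).toReal) := by
  have ratio : ∀ d : ℝ, Tendsto (fun T : ℝ => (T + d) / T) atTop (𝓝 1) := by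
    intro d
    have h : Tendsto (fun T : ℝ => 1 + d / T) atTop (𝓝 (1 + 0)) :=
      tendsto_const_nhds.add (tendsto_const_nhds.div_atTop tendsto_id)
    rw [add_zero] at h
    refine h.congr' ?_
    filter_upwards [eventually_ne_atTop (0:ℝ)] with T hT
    field_simp
  have comp : ∀ d c'' : ℝ, 0 < c'' → c'' ≤ c →
      Tendsto (fun T : ℝ => ((Fset n (T + d) c'' ∩ Λ).ncard : ℝ) / T) atTop
        (𝓝 (lam (Fset n 1 c'')).toReal) := by
    intro d c'' h1 h2
    have hbase := hF c'' h1 h2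
    have hcomp := hbase.comp (tendsto_atTop_add_const_right atTop d tendsto_id)
    have hmul := hcomp.mul (ratio d)
    rw [mul_one] at hmul
    refine hmul.congr' ?_
    filter_upwards [eventually_gt_atTop (max 0 (-d))] with T hT
    have h0 : T ≠ 0 := by
      have := lt_of_le_of_lt (le_max_left 0 (-d)) hT
      exact ne_of_gt this
    have hd0 : T + d ≠ 0 := by
      have := lt_of_le_of_lt (le_max_right 0 (-d)) hT
      exact ne_of_gt (by linarith)
    simp only [Function.comp, id_eq]
    field_simp
  have hzero : ∀ a : ℝ, Tendsto (fun T : ℝ => a / T) atTop (𝓝 0) := fun a =>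
    tendsto_const_nhds.div_atTop tendsto_id
  rw [Metric.tendsto_nhds]
  intro ε hε
  -- choose c' < c with measure close to that of F_{1,c}
  obtain ⟨c', hc'0, hc'c, hc'L⟩ : ∃ c' : ℝ, 0 < c' ∧ c' < c ∧
      (lam (Fset n 1 c)).toReal - ε / 2 < (lam (Fset n 1 c')).toReal := by
    have hck : ∀ k : ℕ, 0 < c - c / ((k:ℝ) + 2) ∧ c - c / ((k:ℝ) + 2) < c := by
      intro k
      have hk2 : (2:ℝ) ≤ (k:ℝ) + 2 := by
        have : (0:ℝ) ≤ (k:ℝ) := Nat.cast_nonneg k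
        linarith
      have h1 : c / ((k:ℝ) + 2) ≤ c / 2 :=
        div_le_div_of_nonneg_left hc.le two_pos hk2
      have h2 : 0 < c / ((k:ℝ) + 2) := div_pos hc (by linarith)
      constructor <;> linarith
    have hmono : Monotone (fun k : ℕ => Fset n 1 (c - c / ((k:ℝ) + 2))) := by
      intro k l hkl
      apply Fset_mono_c (hck k).1.le
      have hkl' : ((k:ℝ) + 2) ≤ ((l:ℝ) + 2) := by
        have : (k:ℝ) ≤ (l:ℝ) := Nat.cast_le.2 hkl
        linarith
      have : c / ((l:ℝ) + 2) ≤ c / ((k:ℝ) + 2) :=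
        div_le_div_of_nonneg_left hc.le (by positivity) hkl'
      linarith
    have hUsub : (⋃ k : ℕ, Fset n 1 (c - c / ((k:ℝ) + 2))) = Fset n 1 c := by
      apply Set.Subset.antisymm
      · exact Set.iUnion_subset fun k => Fset_mono_c (hck k).1.le (hck k).2.le
      · rintro x ⟨hxL, h1, h2, h3⟩
        obtain ⟨k, hk⟩ := exists_nat_gt (2 * c ^ 2 / (c ^ 2 - (x (lastC n) ^ 2 - x (sndC n) ^ 2)))
        refine Set.mem_iUnion.2 ⟨k, hxL, ?_, h2, h3⟩
        obtain ⟨t, ht⟩ : ∃ t : ℝ, t = x (lastC n) ^ 2 - x (sndC n) ^ 2 := ⟨_, rfl⟩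
        rw [← ht] at h1 ⊢
        rw [← ht] at hk
        have hm : (0:ℝ) < (k:ℝ) + 2 := by positivity
        have hdt : 0 < c ^ 2 - t := by linarith
        have hk2 : 2 * c ^ 2 / (c ^ 2 - t) < (k:ℝ) + 2 := by
          have : (k:ℝ) ≤ (k:ℝ) + 2 := by linarith
          linarith
        have h2c : 2 * c ^ 2 < ((k:ℝ) + 2) * (c ^ 2 - t) := by
          have := (div_lt_iff₀ hdt).1 hk2
          linarith [this]
        have h3c : 2 * (c ^ 2 / ((k:ℝ) + 2)) < c ^ 2 - t := by
          have h' : 2 * c ^ 2 < (c ^ 2 - t) * ((k:ℝ) + 2) := by nlinarith [h2c]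
          have h'' := (div_lt_iff₀ hm).2 h'
          calc 2 * (c ^ 2 / ((k:ℝ) + 2)) = 2 * c ^ 2 / ((k:ℝ) + 2) := by ring
            _ < c ^ 2 - t := h''
        have he : (c - c / ((k:ℝ) + 2)) ^ 2
            = c ^ 2 - 2 * (c ^ 2 / ((k:ℝ) + 2)) + (c / ((k:ℝ) + 2)) ^ 2 := by
          field_simp
          ring
        nlinarith [sq_nonneg (c / ((k:ℝ) + 2)), he, h3c]
    have htend := tendsto_measure_iUnion_atTop (μ := lam) hmono
    rw [hUsub] at htend
    have htoReal : Tendsto (fun k : ℕ => (lam (Fset n 1 (c - c / ((k:ℝ) + 2)))).toReal) atTop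
        (𝓝 (lam (Fset n 1 c)).toReal) := (ENNReal.tendsto_toReal hfin.ne).comp htend
    have hev : ∀ᶠ k : ℕ in atTop,
        (lam (Fset n 1 c)).toReal - ε / 2 < (lam (Fset n 1 (c - c / ((k:ℝ) + 2)))).toReal :=
      htoReal.eventually (eventually_gt_nhds (by linarith))
    obtain ⟨k, hk⟩ := hev.exists
    exact ⟨c - c / ((k:ℝ) + 2), (hck k).1, (hck k).2, hk⟩
  -- the two comparison limits
  have hlow := comp (-1) c' hc'0 hc'c.le
  simp only [← sub_eq_add_neg] at hlow
  have hup := comp (Real.log 2) c hc le_rfl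
  -- the error sets
  obtain ⟨K1, hK1def⟩ : ∃ K : Set (EuclideanSpace ℝ (Fin (n + 2))),
      K = {x ∈ Λ | x (lastC n) ≤ (max 2 (1 + c' ^ 4 / (c ^ 2 - c' ^ 2)) + c' ^ 2) / 2} :=
    ⟨_, rfl⟩
  obtain ⟨K2, hK2def⟩ : ∃ K : Set (EuclideanSpace ℝ (Fin (n + 2))),
      K = {x ∈ Λ | x (lastC n) ≤ (1 + c) / 2} := ⟨_, rfl⟩
  have hK1fin : K1.Finite := hK1def ▸ finite_slab hΛL hdisc _
  have hK2fin : K2.Finite := hK2def ▸ finite_slab hΛL hdisc _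
  -- eventual bounds
  have hev1 := Metric.tendsto_nhds.1 hlow (ε / 4) (by linarith)
  have hev2 := Metric.tendsto_nhds.1 hup (ε / 2) (by linarith)
  have hev3 : ∀ᶠ T : ℝ in atTop, (K1.ncard : ℝ) / T < ε / 4 :=
    (hzero K1.ncard).eventually (eventually_lt_nhds (by linarith))
  have hev4 : ∀ᶠ T : ℝ in atTop, (K2.ncard : ℝ) / T < ε / 2 :=
    (hzero K2.ncard).eventually (eventually_lt_nhds (by linarith))
  filter_upwards [hev1, hev2, hev3, hev4,
    eventually_ge_atTop (max 1 (Real.log (c' ^ 2 / (1 - Real.exp (-1))))),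
    eventually_gt_atTop (0:ℝ)] with T h1 h2 h3 h4 h5 h6
  rw [Real.dist_eq] at h1 h2 ⊢
  have hT0 : (0:ℝ) ≤ T := h6.le
  -- counting inequalities
  have hn1 : (Fset n (T - 1) c' ∩ Λ).ncard ≤ (Eset n T c ∩ Λ).ncard + K1.ncard := by
    refine le_trans (Set.ncard_le_ncard ?_ ((Efin hΛL hdisc T c).union hK1fin))
      (Set.ncard_union_le _ _)
    rw [hK1def]
    exact low_incl hc'0 hc'c Λ h5
  have hn2 : (Eset n T c ∩ Λ).ncard ≤ (Fset n (T + Real.log 2) c ∩ Λ).ncard + K2.ncard := by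
    refine le_trans (Set.ncard_le_ncard ?_ ((Ffin hΛL hdisc _ _).union hK2fin))
      (Set.ncard_union_le _ _)
    rw [hK2def]
    exact up_incl hc Λ hT0
  have hr1 : ((Fset n (T - 1) c' ∩ Λ).ncard : ℝ)
      ≤ ((Eset n T c ∩ Λ).ncard : ℝ) + (K1.ncard : ℝ) := by exact_mod_cast hn1
  have hr2 : ((Eset n T c ∩ Λ).ncard : ℝ)
      ≤ ((Fset n (T + Real.log 2) c ∩ Λ).ncard : ℝ) + (K2.ncard : ℝ) := by exact_mod_cast hn2
  have hd1 : ((Fset n (T - 1) c' ∩ Λ).ncard : ℝ) / T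
      ≤ ((Eset n T c ∩ Λ).ncard : ℝ) / T + (K1.ncard : ℝ) / T := by
    rw [← add_div]; exact div_le_div_of_nonneg_right hr1 h6.le
  have hd2 : ((Eset n T c ∩ Λ).ncard : ℝ) / T
      ≤ ((Fset n (T + Real.log 2) c ∩ Λ).ncard : ℝ) / T + (K2.ncard : ℝ) / T := by
    rw [← add_div]; exact div_le_div_of_nonneg_right hr2 h6.le
  have habs1 := abs_sub_lt_iff.1 h1
  have habs2 := abs_sub_lt_iff.1 h2
  rw [abs_sub_lt_iff]
  constructor
  · linarith [habs2.1, habs2.2]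
  · linarith [habs1.1, habs1.2]
end
end

section
/- Let α ∈ S^n, let c, T > 0, and let k ∈ SO(n+1) satisfy kα = u_{n+1}, the (n+1)-st standard basis vector of ℝ^{n+1}. Let v ∈ 𝓛 have last coordinate q > 0, and write v = (p, q) with p ∈ ℝ^{n+1} the first n+1 coordinates (so ‖p‖ = q). Then ‖α − p/q‖ < c/q and 1 ≤ q < cosh T hold if and only if k̂(p,q) ∈ E_{T,c}. -/
noncomputable section

open MeasureTheory Metric Filter Topology
open scoped ENNReal

/-- The block-diagonal action of a linear isometry `k` of `ℝ^{n+1}` on `ℝ^{n+2}`: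
`k` on the first `n+1` coordinates, identity on the last coordinate. -/
def khat (n : ℕ)
    (k : EuclideanSpace ℝ (Fin (n + 1)) ≃ₗᵢ[ℝ] EuclideanSpace ℝ (Fin (n + 1)))
    (x : EuclideanSpace ℝ (Fin (n + 2))) : EuclideanSpace ℝ (Fin (n + 2)) :=
  WithLp.toLp 2 (fun i => Fin.lastCases (x (lastC n)) (fun j => k (firstPart n x) j) i)

set_option maxHeartbeats 1000000 in
/-- **Lemma 2.1**: `(p,q) ∈ 𝓛` is a solution of the Diophantine system iff `k̂(p,q)`
lies in `E_{T,c}`, for `k ∈ SO(n+1)` with `kα = u_{n+1}`. -/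
theorem solution_iff_mem_Eset (n : ℕ) (hn : 1 ≤ n)
    (α : EuclideanSpace ℝ (Fin (n + 1)))
    (hα : α ∈ sphere (0 : EuclideanSpace ℝ (Fin (n + 1))) 1)
    (c T : ℝ) (hc : 0 < c) (hT : 0 < T)
    (k : EuclideanSpace ℝ (Fin (n + 1)) ≃ₗᵢ[ℝ] EuclideanSpace ℝ (Fin (n + 1)))
    (hk : LinearMap.det (k.toLinearEquiv : EuclideanSpace ℝ (Fin (n + 1)) →ₗ[ℝ] EuclideanSpace ℝ (Fin (n + 1))) = 1)
    (hkα : k α = EuclideanSpace.single (Fin.last n) (1 : ℝ))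
    (v : EuclideanSpace ℝ (Fin (n + 2))) (hv : v ∈ lightCone n)
    (hq : 0 < v (lastC n)) :
    (‖α - (v (lastC n))⁻¹ • firstPart n v‖ < c / v (lastC n) ∧
        1 ≤ v (lastC n) ∧ v (lastC n) < Real.cosh T) ↔
      khat n k v ∈ Eset n T c := by

  classical
  set q : ℝ := v (lastC n) with hqdef
  set p : EuclideanSpace ℝ (Fin (n + 1)) := firstPart n v with hpdef
  have norm_sq : ∀ w : EuclideanSpace ℝ (Fin (n+1)), ‖w‖^2 = ∑ i, w i ^ 2 := by
    intro w
    rw [EuclideanSpace.norm_eq, Real.sq_sqrt (by positivity)]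
    simp [sq_abs]
  have hplast : ∀ i : Fin (n+1), (khat n k v) (Fin.castSucc i) = k p i := by
    intro i; simp [khat, Fin.lastCases_castSucc]; rfl
  have hlast : (khat n k v) (lastC n) = q := by
    show (Fin.lastCases (v (lastC n)) (fun j => k p j) (Fin.last (n+1)) : ℝ) = q
    rw [Fin.lastCases_last]
  have hsc : sndC n = Fin.castSucc (Fin.last n) := rfl
  have hsnd : (khat n k v) (sndC n) = k p (Fin.last n) := by
    rw [hsc, hplast]
  have hQ : ∑ i, p i ^ 2 = q ^ 2 := by
    have := hv.1
    unfold Qf at this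
    have : (∑ i : Fin (n+1), v (Fin.castSucc i) ^ 2) = q ^ 2 := by linarith
    simpa [hpdef, firstPart] using this
  have hpnorm : ‖p‖ = q := by
    have h1 : ‖p‖ ^ 2 = q ^ 2 := by rw [norm_sq]; exact hQ
    rw [← Real.sqrt_sq (norm_nonneg p), h1, Real.sqrt_sq hq.le]
  have hcone : khat n k v ∈ lightCone n := by
    constructor
    · unfold Qf
      rw [hlast]
      have : (∑ i : Fin (n+1), (khat n k v) (Fin.castSucc i) ^ 2) = q ^ 2 := by
        calc (∑ i : Fin (n+1), (khat n k v) (Fin.castSucc i) ^ 2)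
            = ∑ i, (k p) i ^ 2 := by simp [hplast]
          _ = ‖k p‖ ^ 2 := (norm_sq _).symm
          _ = ‖p‖ ^ 2 := by rw [k.norm_map]
          _ = q ^ 2 := by rw [hpnorm]
      rw [this]; ring
    · rw [hlast]; exact hq.le
  set s : ℝ := k p (Fin.last n) with hsdef
  have hαnorm : ‖α‖ = 1 := by simpa using hα
  have hinner : (inner ℝ α p : ℝ) = s := by
    have h1 : (inner ℝ α p : ℝ) = inner ℝ (k α) (k p) := (k.inner_map_map α p).symm
    rw [h1, hkα]
    rw [EuclideanSpace.inner_single_left]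
    simp; rfl
  have hN : ‖α - q⁻¹ • p‖ ^ 2 = 2 - 2 * (s / q) := by
    rw [norm_sub_sq_real, real_inner_smul_right, hinner, hαnorm, norm_smul, hpnorm]
    rw [norm_inv, Real.norm_eq_abs, abs_of_pos hq]
    field_simp
    ring
  have hq2 : (0:ℝ) < q ^ 2 := by positivity
  have hN0 : (0:ℝ) ≤ ‖α - q⁻¹ • p‖ := norm_nonneg _
  have hkey : ‖α - q⁻¹ • p‖ < c / q ↔ 2 * q * (q - s) < c ^ 2 := by
    generalize hNg : ‖α - q⁻¹ • p‖ = N at hN hN0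
    have hN2 : N ^ 2 * q ^ 2 = 2 * q * (q - s) := by
      rw [hN]; field_simp
    have hcq : (0:ℝ) < c / q := div_pos hc hq
    have hcq2 : (c / q) ^ 2 * q ^ 2 = c ^ 2 := by field_simp
    constructor
    · intro h
      have h2 : N ^ 2 < (c / q) ^ 2 := by nlinarith
      nlinarith
    · intro h
      have h2 : N ^ 2 < (c / q) ^ 2 := by nlinarith
      nlinarith
  constructor
  · rintro ⟨h1, h2, h3⟩
    refine ⟨hcone, ?_, ?_, ?_⟩ <;> rw [hlast] <;> try rw [hsnd]
    · exact hkey.mp h1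
    · exact h2
    · exact h3
  · rintro ⟨_, h1, h2, h3⟩
    rw [hlast] at h2 h3
    rw [hlast, hsnd] at h1
    exact ⟨hkey.mpr h1, h2, h3⟩
end
end

section
/- Let X be a locally compact, second-countable metric space, let μ and (μ_i)_{i∈ℕ} be Borel probability measures on X such that μ_i → μ weakly. Let G : X → [0,∞) be Borel measurable, bounded on every compact subset of X, with μ-null set of discontinuity points, μ-integrable (∫ G dμ < ∞), and such that ∫ G dμ_i → ∫ G dμ. Then for every ε > 0 there exist i₀ ∈ ℕ and a continuous compactly supported φ : X → [0,1] such that ∫ (1 − φ)·G dμ_i < ε for all i ≥ i₀. -/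
noncomputable section

open MeasureTheory Metric Filter Topology
open scoped ENNReal

namespace UTAux

variable {X : Type*} [MetricSpace X]

/-- Moreau–Yosida style Lipschitz lower approximation of `G`. -/
def moll (G : X → ℝ) (n : ℕ) (x : X) : ℝ := ⨅ y, (min (G y) (n : ℝ) + (n : ℝ) * dist x y)

variable {G : X → ℝ}

lemma moll_term_nonneg (hG0 : ∀ x, 0 ≤ G x) (n : ℕ) (x y : X) :
    0 ≤ min (G y) (n : ℝ) + (n : ℝ) * dist x y :=
  add_nonneg (le_min (hG0 y) (Nat.cast_nonneg n)) (mul_nonneg (Nat.cast_nonneg n) dist_nonneg)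

lemma moll_bdd (hG0 : ∀ x, 0 ≤ G x) (n : ℕ) (x : X) :
    BddBelow (Set.range fun y => min (G y) (n : ℝ) + (n : ℝ) * dist x y) :=
  ⟨0, by rintro _ ⟨y, rfl⟩; exact moll_term_nonneg hG0 n x y⟩

lemma moll_nonneg (hG0 : ∀ x, 0 ≤ G x) (n : ℕ) (x : X) : 0 ≤ moll G n x :=
  Real.iInf_nonneg fun y => moll_term_nonneg hG0 n x y

lemma moll_le (hG0 : ∀ x, 0 ≤ G x) (n : ℕ) (x : X) : moll G n x ≤ min (G x) (n : ℝ) := by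
  have := ciInf_le (moll_bdd hG0 n x) x
  simpa [moll] using this

lemma moll_le_G (hG0 : ∀ x, 0 ≤ G x) (n : ℕ) (x : X) : moll G n x ≤ G x :=
  (moll_le hG0 n x).trans (min_le_left _ _)

lemma moll_le_n (hG0 : ∀ x, 0 ≤ G x) (n : ℕ) (x : X) : moll G n x ≤ (n : ℝ) :=
  (moll_le hG0 n x).trans (min_le_right _ _)

lemma moll_mono [Nonempty X] (hG0 : ∀ x, 0 ≤ G x) (x : X) :
    Monotone fun n => moll G n x := by
  intro n m hnm
  refine le_ciInf fun y => ?_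
  refine (ciInf_le (moll_bdd hG0 n x) y).trans ?_
  have hc : (n : ℝ) ≤ (m : ℝ) := Nat.cast_le.2 hnm
  exact add_le_add (min_le_min le_rfl hc) (mul_le_mul_of_nonneg_right hc dist_nonneg)

lemma moll_lipschitz [Nonempty X] (hG0 : ∀ x, 0 ≤ G x) (n : ℕ) :
    LipschitzWith n (moll G n) := by
  have key : ∀ x x' : X, moll G n x ≤ moll G n x' + (n : ℝ) * dist x x' := by
    intro x x'
    rw [← sub_le_iff_le_add]
    refine le_ciInf fun y => ?_
    rw [sub_le_iff_le_add]
    calc moll G n x ≤ min (G y) (n : ℝ) + (n : ℝ) * dist x y :=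
          ciInf_le (moll_bdd hG0 n x) y
      _ ≤ min (G y) (n : ℝ) + (n : ℝ) * (dist x' y + dist x x') := by
          have hd : dist x y ≤ dist x' y + dist x x' := by
            calc dist x y ≤ dist x x' + dist x' y := dist_triangle _ _ _
              _ = dist x' y + dist x x' := by ring
          have := mul_le_mul_of_nonneg_left hd (Nat.cast_nonneg (α := ℝ) n)
          linarith
      _ = min (G y) (n : ℝ) + (n : ℝ) * dist x' y + (n : ℝ) * dist x x' := by ring
  refine LipschitzWith.of_dist_le_mul fun x x' => ?_
  have h1 := key x x'
  have h2 := key x' x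
  rw [dist_comm x' x] at h2
  rw [Real.dist_eq, abs_sub_le_iff]
  push_cast
  constructor <;> linarith

lemma moll_tendsto [Nonempty X] (hG0 : ∀ x, 0 ≤ G x) {x : X} (hx : ContinuousAt G x) :
    Tendsto (fun n => moll G n x) atTop (𝓝 (G x)) := by
  rw [tendsto_order]
  constructor
  · intro a ha
    set a' : ℝ := (a + G x) / 2 with ha'def
    have ha1 : a < a' := by simp only [ha'def]; linarith
    have ha2 : a' < G x := by simp only [ha'def]; linarith
    have hnhds : G ⁻¹' Set.Ioi a' ∈ 𝓝 x := hx (Ioi_mem_nhds ha2)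
    rcases Metric.mem_nhds_iff.1 hnhds with ⟨r, hr, hball⟩
    obtain ⟨n₀, hn₀⟩ := exists_nat_ge (max (G x) (G x / r))
    filter_upwards [eventually_ge_atTop n₀] with n hn
    have hcast : (n₀ : ℝ) ≤ (n : ℝ) := Nat.cast_le.2 hn
    have hnG : G x ≤ (n : ℝ) := ((le_max_left _ _).trans hn₀).trans hcast
    have hnr : G x ≤ (n : ℝ) * r := by
      have h1 : G x / r ≤ (n : ℝ) := ((le_max_right _ _).trans hn₀).trans hcast
      have := mul_le_mul_of_nonneg_right h1 hr.le
      rwa [div_mul_cancel₀ _ hr.ne'] at this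
    have key : ∀ y, min a' (G x) ≤ min (G y) (n : ℝ) + (n : ℝ) * dist x y := by
      intro y
      rcases lt_or_ge (dist y x) r with h | h
      · have hy : a' < G y := hball (Metric.mem_ball.2 h)
        have h1 : min a' (G x) ≤ min (G y) (n : ℝ) :=
          le_min ((min_le_left _ _).trans hy.le) ((min_le_right _ _).trans hnG)
        have h2 : (0 : ℝ) ≤ (n : ℝ) * dist x y :=
          mul_nonneg (Nat.cast_nonneg n) dist_nonneg
        linarith
      · have h2 : (n : ℝ) * r ≤ (n : ℝ) * dist x y := by
          rw [dist_comm x y]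
          exact mul_le_mul_of_nonneg_left h (Nat.cast_nonneg n)
        have h3 : (0 : ℝ) ≤ min (G y) (n : ℝ) := le_min (hG0 y) (Nat.cast_nonneg n)
        calc min a' (G x) ≤ G x := min_le_right _ _
          _ ≤ (n : ℝ) * r := hnr
          _ ≤ min (G y) (n : ℝ) + (n : ℝ) * dist x y := by linarith
    calc a < min a' (G x) := lt_min ha1 ha
      _ ≤ moll G n x := le_ciInf key
  · intro a ha
    filter_upwards with n
    exact lt_of_le_of_lt (moll_le_G hG0 n x) ha

end UTAux

open UTAux

/-- **Corollary 6.3**: uniform smallness of `∫ (1-φ)·G dμ_i` outside a compact set. -/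
theorem uniform_tightness_of_integrals (X : Type*) [MetricSpace X] [LocallyCompactSpace X]
    [SecondCountableTopology X] [MeasurableSpace X] [BorelSpace X]
    (μ : Measure X) (μs : ℕ → Measure X)
    (hμ : IsProbabilityMeasure μ) (hμs : ∀ i, IsProbabilityMeasure (μs i))
    (hweak : ∀ f : X → ℝ, Continuous f → (∃ C : ℝ, ∀ x, |f x| ≤ C) →
      Tendsto (fun i => ∫ x, f x ∂(μs i)) atTop (𝓝 (∫ x, f x ∂μ)))
    (G : X → ℝ) (hGm : Measurable G) (hG0 : ∀ x, 0 ≤ G x)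
    (hGb : ∀ K : Set X, IsCompact K → ∃ C : ℝ, ∀ x ∈ K, G x ≤ C)
    (hGd : μ {x | ¬ ContinuousAt G x} = 0)
    (hGint : Integrable G μ)
    (hGconv : Tendsto (fun i => ∫ x, G x ∂(μs i)) atTop (𝓝 (∫ x, G x ∂μ)))
    (ε : ℝ) (hε : 0 < ε) :
    ∃ (i₀ : ℕ) (φ : X → ℝ), Continuous φ ∧ HasCompactSupport φ ∧
      (∀ x, 0 ≤ φ x ∧ φ x ≤ 1) ∧
      ∀ i, i₀ ≤ i → ∫ x, (1 - φ x) * G x ∂(μs i) < ε := by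
  haveI : Nonempty X := by
    by_contra hne
    rw [not_nonempty_iff] at hne
    have h1 : (Set.univ : Set X) = ∅ := Set.univ_eq_empty_iff.2 hne
    have := hμ.measure_univ
    rw [h1, measure_empty] at this
    exact zero_ne_one this
  -- a.e. continuity
  have haeC : ∀ᵐ x ∂μ, ContinuousAt G x := ae_iff.mpr hGd
  -- the approximations
  have hmollC : ∀ n : ℕ, Continuous (moll G n) := fun n => (moll_lipschitz hG0 n).continuous
  have hmoll_int : ∀ n : ℕ, Integrable (moll G n) μ := fun n => by
    refine hGint.mono (hmollC n).aestronglyMeasurable (ae_of_all _ fun x => ?_)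
    rw [Real.norm_eq_abs, Real.norm_eq_abs, abs_of_nonneg (moll_nonneg hG0 n x),
      abs_of_nonneg (hG0 x)]
    exact moll_le_G hG0 n x
  have hconv : Tendsto (fun n => ∫ x, moll G n x ∂μ) atTop (𝓝 (∫ x, G x ∂μ)) :=
    integral_tendsto_of_tendsto_of_monotone hmoll_int hGint
      (ae_of_all _ fun x => moll_mono hG0 x)
      (haeC.mono fun x hx => moll_tendsto hG0 hx)
  -- pick N with ∫ h dμ close to ∫ G dμ
  obtain ⟨N, hN⟩ := ((tendsto_order.1 hconv).1 (∫ x, G x ∂μ - ε / 4) (by linarith)).exists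
  set h : X → ℝ := moll G N with hh
  -- pick a compact set K with small complement measure
  set δ : ℝ := ε / (4 * ((N : ℝ) + 1)) with hδdef
  have hNpos : (0 : ℝ) < (N : ℝ) + 1 := by positivity
  have hδpos : 0 < δ := by positivity
  have htend0 : Tendsto (fun n => μ (compactCovering X n)ᶜ) atTop (𝓝 0) := by
    have hmono : Antitone fun n => (compactCovering X n)ᶜ := fun m n hmn =>
      Set.compl_subset_compl.2 (compactCovering_subset X hmn)
    have h1 := MeasureTheory.tendsto_measure_iInter_atTop
      (s := fun n => (compactCovering X n)ᶜ)
      (fun n => ((isCompact_compactCovering X n).isClosed.measurableSet.compl).nullMeasurableSet)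
      hmono ⟨0, measure_ne_top μ _⟩
    have h2 : (⋂ n, (compactCovering X n)ᶜ) = (∅ : Set X) := by
      rw [← Set.compl_iUnion, iUnion_compactCovering, Set.compl_univ]
    rw [h2, measure_empty] at h1
    exact h1
  obtain ⟨n, hn⟩ := (htend0.eventually_lt_const
    (by simp [ENNReal.ofReal_pos, hδpos] : (0 : ℝ≥0∞) < ENNReal.ofReal δ)).exists
  set K : Set X := compactCovering X n with hK
  have hKc : IsCompact K := isCompact_compactCovering X n
  -- Urysohn function
  obtain ⟨f, hf1, _hf0, hfc, hf01⟩ :=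
    exists_continuous_one_zero_of_isCompact hKc isClosed_empty (Set.disjoint_empty _)
  -- the comparison function ψ = f * h
  set ψ : X → ℝ := fun x => f x * h x with hψdef
  have hψcont : Continuous ψ := f.continuous.mul (hmollC N)
  have hψ01 : ∀ x, |ψ x| ≤ (N : ℝ) := by
    intro x
    rw [hψdef, abs_mul]
    have h1 : |f x| ≤ 1 := abs_le.2 ⟨by linarith [(hf01 x).1], (hf01 x).2⟩
    have h2 : |h x| ≤ (N : ℝ) := by
      rw [abs_of_nonneg (moll_nonneg hG0 N x)]; exact moll_le_n hG0 N x
    calc |f x| * |h x| ≤ 1 * (N : ℝ) := by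
          exact mul_le_mul h1 h2 (abs_nonneg _) zero_le_one
      _ = (N : ℝ) := one_mul _
  have hψtend := hweak ψ hψcont ⟨(N : ℝ), hψ01⟩
  -- ψ is integrable for any probability measure
  have hψ_int : ∀ (ν : Measure X), IsProbabilityMeasure ν → Integrable ψ ν := by
    intro ν hν
    refine Integrable.mono' (integrable_const (N : ℝ)) hψcont.aestronglyMeasurable
      (ae_of_all _ fun x => ?_)
    rw [Real.norm_eq_abs]; exact hψ01 x
  -- ∫ ψ dμ is close to ∫ h dμ
  have hμKc : (μ Kᶜ).toReal < δ := ENNReal.toReal_lt_of_lt_ofReal hn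
  have hstep : ∫ x, h x ∂μ - ∫ x, ψ x ∂μ ≤ (N : ℝ) * (μ Kᶜ).toReal := by
    rw [← integral_sub (hmoll_int N) (hψ_int μ hμ)]
    have hbound : ∀ x, h x - ψ x ≤ Kᶜ.indicator (fun _ => (N : ℝ)) x := by
      intro x
      by_cases hx : x ∈ K
      · have : f x = 1 := hf1 hx
        simp [hψdef, this, Set.indicator_of_notMem (by simpa using hx : x ∉ Kᶜ)]
      · rw [Set.indicator_of_mem (by simpa using hx) (fun _ => (N : ℝ))]
        have h1 : 0 ≤ f x * h x := mul_nonneg (hf01 x).1 (moll_nonneg hG0 N x)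
        have h2 : h x ≤ (N : ℝ) := moll_le_n hG0 N x
        simp only [hψdef]; linarith
    calc ∫ x, (h x - ψ x) ∂μ ≤ ∫ x, Kᶜ.indicator (fun _ => (N : ℝ)) x ∂μ := by
          refine integral_mono ((hmoll_int N).sub (hψ_int μ hμ)) ?_ hbound
          exact (integrable_const _).indicator hKc.isClosed.measurableSet.compl
      _ = (μ Kᶜ).toReal • (N : ℝ) :=
          integral_indicator_const _ hKc.isClosed.measurableSet.compl
      _ = (N : ℝ) * (μ Kᶜ).toReal := by rw [smul_eq_mul, mul_comm]
  have hδN : (N : ℝ) * (μ Kᶜ).toReal < ε / 4 := by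
    have h1 : (N : ℝ) * (μ Kᶜ).toReal ≤ (N : ℝ) * δ :=
      mul_le_mul_of_nonneg_left hμKc.le (Nat.cast_nonneg N)
    have h2 : (N : ℝ) * δ < ((N : ℝ) + 1) * δ := by nlinarith
    have h3 : ((N : ℝ) + 1) * δ = ε / 4 := by
      rw [hδdef]; field_simp
    linarith
  have hψμ : ∫ x, G x ∂μ - ε / 2 < ∫ x, ψ x ∂μ := by
    have := hstep
    have hNint : ∫ x, G x ∂μ - ε / 4 < ∫ x, h x ∂μ := hN
    linarith
  -- the limit of the difference is < ε
  have hlim : Tendsto (fun i => ∫ x, G x ∂(μs i) - ∫ x, ψ x ∂(μs i)) atTop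
      (𝓝 (∫ x, G x ∂μ - ∫ x, ψ x ∂μ)) := hGconv.sub hψtend
  have hev : ∀ᶠ i in atTop, ∫ x, G x ∂(μs i) - ∫ x, ψ x ∂(μs i) < ε :=
    hlim.eventually_lt_const (by linarith)
  obtain ⟨i₀, hi₀⟩ := eventually_atTop.1 hev
  -- G bounded on the support of f
  obtain ⟨C, hC⟩ := hGb (tsupport f) hfc
  refine ⟨i₀, fun x => f x, f.continuous, hfc, fun x => ⟨(hf01 x).1, (hf01 x).2⟩,
    fun i hi => ?_⟩
  haveI := hμs i
  -- f·G is integrable w.r.t. μs i (bounded)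
  have hφG_int : Integrable (fun x => f x * G x) (μs i) := by
    refine Integrable.mono' (integrable_const (max C 0))
      (f.continuous.measurable.mul hGm).aestronglyMeasurable (ae_of_all _ fun x => ?_)
    rw [Real.norm_eq_abs, abs_mul]
    by_cases hx : x ∈ tsupport f
    · have h1 : |f x| ≤ 1 := abs_le.2 ⟨by linarith [(hf01 x).1], (hf01 x).2⟩
      have h2 : |G x| ≤ max C 0 := by
        rw [abs_of_nonneg (hG0 x)]; exact (hC x hx).trans (le_max_left _ _)
      calc |f x| * |G x| ≤ 1 * max C 0 :=
            mul_le_mul h1 h2 (abs_nonneg _) zero_le_one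
        _ = max C 0 := one_mul _
    · rw [image_eq_zero_of_notMem_tsupport hx]
      simp [le_max_right C 0]
  by_cases hInt : Integrable G (μs i)
  · -- integrable case : split the integral
    have hsplit : ∫ x, (1 - f x) * G x ∂(μs i)
        = ∫ x, G x ∂(μs i) - ∫ x, f x * G x ∂(μs i) := by
      have heq : (fun x => (1 - f x) * G x) = fun x => G x - f x * G x := by
        funext x; ring
      rw [heq, integral_sub hInt hφG_int]
    have hmono2 : ∫ x, ψ x ∂(μs i) ≤ ∫ x, f x * G x ∂(μs i) := by
      refine integral_mono (hψ_int (μs i) (hμs i)) hφG_int fun x => ?_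
      exact mul_le_mul_of_nonneg_left (moll_le_G hG0 N x) (hf01 x).1
    rw [hsplit]
    calc ∫ x, G x ∂(μs i) - ∫ x, f x * G x ∂(μs i)
        ≤ ∫ x, G x ∂(μs i) - ∫ x, ψ x ∂(μs i) := by linarith
      _ < ε := hi₀ i hi
  · -- non-integrable case : the integral is 0 by convention
    have hnot : ¬ Integrable (fun x => (1 - f x) * G x) (μs i) := by
      intro hcon
      apply hInt
      have heq : G = fun x => (1 - f x) * G x + f x * G x := by funext x; ring
      rw [heq]
      exact hcon.add hφG_int
    rw [integral_undef hnot]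
    exact hε
end
end

section
/- For every c > 0 and every ε ∈ (0,1) there exists δ > 0 such that for all y ∈ ℝ^n with ‖y‖ ≤ δ, all s ∈ [0, 1/2], and every x ∈ 𝓛 of the form x = g_s x' with x' ∈ 𝓛 satisfying (x'_{n+2})² − (x'_{n+1})² < c² and x'_{n+1} + x'_{n+2} ≥ 1, one has (1 − ε)(x_{n+1} + x_{n+2}) < (u_y x)_{n+1} + (u_y x)_{n+2} < (1 + ε)(x_{n+1} + x_{n+2}); moreover (u_y x)_{n+2} − (u_y x)_{n+1} = x_{n+2} − x_{n+1} for every x ∈ ℝ^{n+2}. -/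
noncomputable section

open MeasureTheory Metric Filter Topology
open scoped ENNReal

/-- The unipotent map `u_y`. -/
def umap (n : ℕ) (y : EuclideanSpace ℝ (Fin n)) (x : EuclideanSpace ℝ (Fin (n + 2))) :
    EuclideanSpace ℝ (Fin (n + 2)) :=
  WithLp.toLp 2 fun i =>
    if h : (i : ℕ) < n then
      x i - x (sndC n) * y ⟨i, h⟩ + x (lastC n) * y ⟨i, h⟩
    else if i = sndC n then
      (∑ j : Fin n, y j * x (Fin.castLE (by omega) j)) +
        (1 - ‖y‖ ^ 2 / 2) * x (sndC n) + (‖y‖ ^ 2 / 2) * x (lastC n)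
    else
      (∑ j : Fin n, y j * x (Fin.castLE (by omega) j)) -
        (‖y‖ ^ 2 / 2) * x (sndC n) + (1 + ‖y‖ ^ 2 / 2) * x (lastC n)


set_option maxHeartbeats 1000000 in
private lemma exp_half_lt_two' : Real.exp (1/2) < 2 := by
  have h := Real.log_two_gt_d9
  have : (1:ℝ)/2 < Real.log 2 := by linarith
  calc Real.exp (1/2) < Real.exp (Real.log 2) := Real.exp_lt_exp.2 this
    _ = 2 := Real.exp_log (by norm_num)

set_option maxHeartbeats 1000000 in
private lemma half_lt_exp_neg' (s : ℝ) (hs : s ≤ 1/2) : 1/2 < Real.exp (-s) := by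
  have h1 : Real.exp (-s) * Real.exp s = 1 := by rw [← Real.exp_add]; simp
  have h2 : Real.exp s < 2 := lt_of_le_of_lt (Real.exp_le_exp.2 hs) exp_half_lt_two'
  nlinarith [Real.exp_pos s, Real.exp_pos (-s)]

set_option maxHeartbeats 1000000 in
private lemma arith_main (c ε δ a' b' Z Y T es ens xa xb : ℝ)
    (hc : 0 < c) (hε : 0 < ε)
    (hδ1 : δ ≤ 1) (hδ2 : δ ≤ ε / (4*c + 4*c^2 + 1)) (hδ0 : 0 ≤ δ)
    (hY : 0 ≤ Y) (hYδ : Y ≤ δ)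
    (hZ : 0 ≤ Z) (hS : Z^2 + a'^2 = b'^2) (hcc : b'^2 - a'^2 < c^2) (h1 : 1 ≤ a' + b')
    (hT : |T| ≤ Y * Z)
    (hes : 0 < es) (hes2 : es < 2) (hens : 1/2 < ens)
    (hab : xa + xb = ens * (a' + b')) (hba : xb - xa = es * (b' - a')) :
    (1 - ε) * (xa + xb) < (xa + xb) + (2*T + Y^2*(xb - xa)) ∧
      (xa + xb) + (2*T + Y^2*(xb - xa)) < (1 + ε) * (xa + xb) := by
  have hD : (0:ℝ) < 4*c + 4*c^2 + 1 := by positivity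
  have hδD : δ * (4*c + 4*c^2 + 1) ≤ ε := (le_div_iff₀ hD).1 hδ2
  have hδε : δ * (2*c + 2*c^2) < ε / 2 := by nlinarith
  have hzc : Z < c := by nlinarith
  have hba0 : 0 ≤ b' - a' := by nlinarith
  have hbac : b' - a' < c ^ 2 := by nlinarith
  have hba0' : 0 ≤ xb - xa := by rw [hba]; positivity
  have hbaU : xb - xa ≤ 2 * c ^ 2 := by nlinarith
  have habge : (1:ℝ)/2 < xa + xb := by nlinarith
  have hyz : Y * Z ≤ δ * c := mul_le_mul hYδ hzc.le hZ hδ0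
  have hY2 : Y^2 ≤ δ^2 := by nlinarith
  have h2 : Y^2 * (xb - xa) ≤ δ^2 * (2*c^2) := mul_le_mul hY2 hbaU hba0' (by positivity)
  have h3 : 0 ≤ Y^2 * (xb - xa) := by positivity
  have habs := abs_le.1 hT
  have hδ2c : δ^2 * (2*c^2) ≤ δ * (2*c^2) := by
    nlinarith [mul_nonneg (mul_nonneg hδ0 (sub_nonneg.2 hδ1)) (sq_nonneg c)]
  have hup : 2*T + Y^2*(xb - xa) ≤ δ*(2*c) + δ*(2*c^2) := by nlinarith
  have hlow : -(δ*(2*c) + δ*(2*c^2)) ≤ 2*T + Y^2*(xb - xa) := by nlinarith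
  have hhalf : ε/2 < ε * (xa + xb) := by nlinarith
  constructor <;> nlinarith

private lemma snd_not_lt (n : ℕ) : ¬ ((sndC n : ℕ) < n) := by simp [sndC]
private lemma last_not_lt (n : ℕ) : ¬ ((lastC n : ℕ) < n) := by simp [lastC]
private lemma last_ne_snd (n : ℕ) : lastC n ≠ sndC n := by simp [lastC, sndC, Fin.ext_iff]

private lemma castLE_ne_snd (n : ℕ) (j : Fin n) :
    (Fin.castLE (by omega) j : Fin (n+2)) ≠ sndC n := by
  simp [sndC, Fin.ext_iff]; omega
private lemma castLE_ne_last (n : ℕ) (j : Fin n) :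
    (Fin.castLE (by omega) j : Fin (n+2)) ≠ lastC n := by
  simp [lastC, Fin.ext_iff]; omega

private lemma gmap_castLE (n : ℕ) (s : ℝ) (x : EuclideanSpace ℝ (Fin (n+2))) (j : Fin n) :
    gmap n s x (Fin.castLE (by omega) j) = x (Fin.castLE (by omega) j) := by
  simp only [gmap, PiLp.toLp_apply, if_neg (castLE_ne_snd n j), if_neg (castLE_ne_last n j)]

private lemma gmap_snd (n : ℕ) (s : ℝ) (x : EuclideanSpace ℝ (Fin (n+2))) :
    gmap n s x (sndC n) = Real.cosh s * x (sndC n) - Real.sinh s * x (lastC n) := by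
  simp only [gmap, PiLp.toLp_apply, if_pos rfl, if_true, eq_self_iff_true]

private lemma gmap_last (n : ℕ) (s : ℝ) (x : EuclideanSpace ℝ (Fin (n+2))) :
    gmap n s x (lastC n) = - Real.sinh s * x (sndC n) + Real.cosh s * x (lastC n) := by
  simp only [gmap, PiLp.toLp_apply, if_neg (last_ne_snd n), if_pos rfl, if_true, eq_self_iff_true]

private lemma umap_snd (n : ℕ) (y : EuclideanSpace ℝ (Fin n))
    (x : EuclideanSpace ℝ (Fin (n+2))) :
    umap n y x (sndC n) = (∑ j : Fin n, y j * x (Fin.castLE (by omega) j)) +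
        (1 - ‖y‖ ^ 2 / 2) * x (sndC n) + (‖y‖ ^ 2 / 2) * x (lastC n) := by
  simp only [umap, PiLp.toLp_apply, dif_neg (snd_not_lt n), if_pos rfl, if_true, eq_self_iff_true]

private lemma umap_last (n : ℕ) (y : EuclideanSpace ℝ (Fin n))
    (x : EuclideanSpace ℝ (Fin (n+2))) :
    umap n y x (lastC n) = (∑ j : Fin n, y j * x (Fin.castLE (by omega) j)) -
        (‖y‖ ^ 2 / 2) * x (sndC n) + (1 + ‖y‖ ^ 2 / 2) * x (lastC n) := by
  simp only [umap, PiLp.toLp_apply, dif_neg (last_not_lt n), if_neg (last_ne_snd n)]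

private lemma qf_split (n : ℕ) (x : EuclideanSpace ℝ (Fin (n+2))) :
    Qf n x = (∑ j : Fin n, x (Fin.castLE (by omega) j) ^ 2) + x (sndC n) ^ 2
      - x (lastC n) ^ 2 := by
  have : (∑ i : Fin (n+1), x (Fin.castSucc i) ^ 2)
      = (∑ j : Fin n, x (Fin.castLE (by omega) j) ^ 2) + x (sndC n) ^ 2 := by
    rw [Fin.sum_univ_castSucc]
    congr 1
  rw [Qf, this]

/-- **Equation (5.2)** and the accompanying identity: estimates for the effect of the
unipotent map `u_y` on the quantity `x_{n+1} + x_{n+2}` along `g_s F_c`. -/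
theorem umap_light_cone_estimates (n : ℕ) (hn : 1 ≤ n) :
    (∀ c : ℝ, 0 < c → ∀ ε : ℝ, 0 < ε → ε < 1 →
      ∃ δ : ℝ, 0 < δ ∧
        ∀ y : EuclideanSpace ℝ (Fin n), ‖y‖ ≤ δ →
          ∀ s ∈ Set.Icc (0 : ℝ) (1 / 2),
            ∀ x' ∈ lightCone n,
              x' (lastC n) ^ 2 - x' (sndC n) ^ 2 < c ^ 2 →
              1 ≤ x' (sndC n) + x' (lastC n) →
              (1 - ε) * (gmap n s x' (sndC n) + gmap n s x' (lastC n)) <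
                  umap n y (gmap n s x') (sndC n) + umap n y (gmap n s x') (lastC n) ∧
                umap n y (gmap n s x') (sndC n) + umap n y (gmap n s x') (lastC n) <
                  (1 + ε) * (gmap n s x' (sndC n) + gmap n s x' (lastC n))) ∧
    (∀ y : EuclideanSpace ℝ (Fin n), ∀ x : EuclideanSpace ℝ (Fin (n + 2)),
      umap n y x (lastC n) - umap n y x (sndC n) = x (lastC n) - x (sndC n)) := by
  constructor
  · intro c hc ε hε hε1
    refine ⟨min 1 (ε / (4*c + 4*c^2 + 1)), lt_min one_pos (by positivity), ?_⟩
    intro y hy s hs x' hx' hcc h1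
    obtain ⟨hs0, hs1⟩ := hs
    set δ := min 1 (ε / (4*c + 4*c^2 + 1)) with hδdef
    obtain ⟨hQ, hb0⟩ := hx'
    set z : EuclideanSpace ℝ (Fin n) := WithLp.toLp 2 (fun j => x' (Fin.castLE (by omega) j)) with hz
    have hzS : ‖z‖ ^ 2 = ∑ j : Fin n, x' (Fin.castLE (by omega) j) ^ 2 := by
      rw [EuclideanSpace.norm_eq, Real.sq_sqrt (by positivity)]
      exact Finset.sum_congr rfl fun j _ => by rw [hz, Real.norm_eq_abs, sq_abs]
    have hS : ‖z‖ ^ 2 + x' (sndC n) ^ 2 = x' (lastC n) ^ 2 := by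
      have h := qf_split n x'
      rw [hQ] at h
      rw [hzS]; linarith
    have hT : |∑ j : Fin n, y j * x' (Fin.castLE (by omega) j)| ≤ ‖y‖ * ‖z‖ := by
      have h := abs_real_inner_le_norm y z
      have h2 : (inner ℝ y z : ℝ) = ∑ j : Fin n, y j * x' (Fin.castLE (by omega) j) := by
        rw [PiLp.inner_apply]
        exact Finset.sum_congr rfl fun j _ => by
          rw [RCLike.inner_apply', starRingEnd_apply, star_trivial, hz]
      rwa [h2] at h
    have hsum : umap n y (gmap n s x') (sndC n) + umap n y (gmap n s x') (lastC n)
        = (gmap n s x' (sndC n) + gmap n s x' (lastC n))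
          + (2 * (∑ j : Fin n, y j * x' (Fin.castLE (by omega) j))
            + ‖y‖^2 * (gmap n s x' (lastC n) - gmap n s x' (sndC n))) := by
      rw [umap_snd, umap_last]
      have hc1 : (∑ j : Fin n, y j * gmap n s x' (Fin.castLE (by omega) j))
          = ∑ j : Fin n, y j * x' (Fin.castLE (by omega) j) :=
        Finset.sum_congr rfl fun j _ => by rw [gmap_castLE]
      rw [hc1]; ring
    have hab : gmap n s x' (sndC n) + gmap n s x' (lastC n)
        = Real.exp (-s) * (x' (sndC n) + x' (lastC n)) := by
      rw [gmap_snd, gmap_last, ← Real.cosh_sub_sinh]; ring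
    have hba : gmap n s x' (lastC n) - gmap n s x' (sndC n)
        = Real.exp s * (x' (lastC n) - x' (sndC n)) := by
      rw [gmap_snd, gmap_last, ← Real.cosh_add_sinh]; ring
    rw [hsum]
    exact arith_main c ε δ (x' (sndC n)) (x' (lastC n)) ‖z‖ ‖y‖ _
      (Real.exp s) (Real.exp (-s)) _ _ hc hε (min_le_left _ _) (min_le_right _ _)
      (le_min zero_le_one (by positivity)) (norm_nonneg y) hy (norm_nonneg z)
      hS hcc h1 hT (Real.exp_pos s)
      (lt_of_le_of_lt (Real.exp_le_exp.2 hs1) exp_half_lt_two')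
      (half_lt_exp_neg' s hs1) hab hba
  · intro y x
    simp only [umap, PiLp.toLp_apply, dif_neg (last_not_lt n), dif_neg (snd_not_lt n),
      if_neg (last_ne_snd n), if_pos rfl, if_true, eq_self_iff_true]
    ring
end
end

section
/- Let f : ℝ^{n+2} → ℝ be bounded with compact support, and define f̂(g) = Σ_{v ∈ Λ₀} f(gv) for g ∈ GL_{n+2}(ℝ) (the sum over the countable set Λ₀). If g₀ ∈ GL_{n+2}(ℝ) is such that f is continuous at g₀v for every v ∈ Λ₀, then f̂ is continuous at g₀; in particular, there is a neighborhood of g₀ on which only finitely many v ∈ Λ₀ contribute a nonzero term. -/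
noncomputable section

open MeasureTheory Metric Filter Topology
open scoped ENNReal

/-- The action of a matrix on `ℝ^{n+2}`. -/
def matAct (n : ℕ) (g : Matrix (Fin (n + 2)) (Fin (n + 2)) ℝ)
    (x : EuclideanSpace ℝ (Fin (n + 2))) : EuclideanSpace ℝ (Fin (n + 2)) :=
  WithLp.toLp 2 (g.mulVec x)

/-- The group `G = SO(n+1,1)°`: matrices preserving `Q`, of determinant one, with
positive lower-right entry. -/
def Ggrp (n : ℕ) : Set (Matrix (Fin (n + 2)) (Fin (n + 2)) ℝ) :=
  {g | (∀ x : EuclideanSpace ℝ (Fin (n + 2)), Qf n (matAct n g x) = Qf n x) ∧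
    g.det = 1 ∧ 0 < g (lastC n) (lastC n)}

open Matrix

/-- aux: Frobenius-type norm of a matrix -/
def frobN (n : ℕ) (A : Matrix (Fin (n + 2)) (Fin (n + 2)) ℝ) : ℝ :=
  Real.sqrt (∑ i, ∑ j, (A i j) ^ 2)

lemma frobN_nonneg (n : ℕ) (A : Matrix (Fin (n + 2)) (Fin (n + 2)) ℝ) : 0 ≤ frobN n A :=
  Real.sqrt_nonneg _

lemma frobN_continuous (n : ℕ) : Continuous (frobN n) := by
  unfold frobN
  exact Real.continuous_sqrt.comp <| continuous_finset_sum _ fun i _ =>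
    continuous_finset_sum _ fun j _ => (continuous_id.matrix_elem i j).pow 2

lemma euclid_coord_le (n : ℕ) (x : EuclideanSpace ℝ (Fin (n + 2))) (i : Fin (n + 2)) :
    |x i| ≤ ‖x‖ := by
  rw [EuclideanSpace.norm_eq, ← Real.sqrt_sq (abs_nonneg (x i))]
  apply Real.sqrt_le_sqrt
  calc |x i| ^ 2 = ‖x i‖ ^ 2 := by rw [Real.norm_eq_abs]
    _ ≤ ∑ j, ‖x j‖ ^ 2 :=
        Finset.single_le_sum (f := fun j => ‖x j‖ ^ 2) (fun j _ => sq_nonneg _)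
          (Finset.mem_univ i)

lemma norm_matAct_le (n : ℕ) (A : Matrix (Fin (n + 2)) (Fin (n + 2)) ℝ)
    (x : EuclideanSpace ℝ (Fin (n + 2))) :
    ‖matAct n A x‖ ≤ frobN n A * ‖x‖ := by
  have hx : ‖x‖ = Real.sqrt (∑ j, (x j) ^ 2) := by
    rw [EuclideanSpace.norm_eq]; simp [Real.norm_eq_abs, sq_abs]
  rw [EuclideanSpace.norm_eq, hx, frobN,
    ← Real.sqrt_mul (by positivity)]
  apply Real.sqrt_le_sqrt
  have h1 : ∀ i, ‖matAct n A x i‖ ^ 2 ≤ (∑ j, (A i j) ^ 2) * (∑ j, (x j) ^ 2) := by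
    intro i
    have : matAct n A x i = ∑ j, A i j * x j := by
      simp [matAct, Matrix.mulVec, dotProduct]
    rw [Real.norm_eq_abs, sq_abs, this]
    exact Finset.sum_mul_sq_le_sq_mul_sq _ _ _
  calc ∑ i, ‖matAct n A x i‖ ^ 2 ≤ ∑ i, (∑ j, (A i j) ^ 2) * (∑ j, (x j) ^ 2) :=
        Finset.sum_le_sum fun i _ => h1 i
    _ = (∑ i, ∑ j, (A i j) ^ 2) * (∑ j, (x j) ^ 2) := by rw [Finset.sum_mul]

lemma finite_int_ball (n : ℕ) (B : ℝ) :
    {x : EuclideanSpace ℝ (Fin (n + 2)) | (∀ i, ∃ m : ℤ, x i = (m : ℝ)) ∧ ‖x‖ ≤ B}.Finite := by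
  have hfin : (Set.pi Set.univ fun _ : Fin (n + 2) => (Set.Icc (-⌈B⌉) ⌈B⌉ : Set ℤ)).Finite :=
    Set.Finite.pi fun _ => Set.finite_Icc _ _
  apply Set.Finite.subset
    (hfin.image (fun m => (WithLp.toLp 2 (fun i => (m i : ℝ)) : EuclideanSpace ℝ (Fin (n + 2)))))
  rintro x ⟨hint, hx⟩
  choose m hm using hint
  refine ⟨m, fun i _ => ?_, ?_⟩
  · have h1 : |x i| ≤ B := (euclid_coord_le n x i).trans hx
    rw [hm i] at h1
    have hc := Int.le_ceil B
    constructor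
    · have h2 : -B ≤ (m i : ℝ) := neg_le_of_abs_le h1
      have : (-(⌈B⌉ : ℝ)) ≤ (m i : ℝ) := le_trans (neg_le_neg hc) h2
      exact_mod_cast this
    · have h2 : (m i : ℝ) ≤ B := le_of_abs_le h1
      have : (m i : ℝ) ≤ (⌈B⌉ : ℝ) := h2.trans hc
      exact_mod_cast this
  · ext i
    exact (hm i).symm

/-- **Lemma 6.1**: the Siegel transform of a bounded compactly supported function `f` is
continuous at every `g₀ ∈ GL_{n+2}(ℝ)` such that `f` is continuous at each point `g₀v`,
`v ∈ Λ₀`; moreover on some neighborhood of `g₀` only finitely many `v ∈ Λ₀` contribute. -/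
theorem siegel_transform_continuousAt (n : ℕ) (hn : 1 ≤ n)
    (f : EuclideanSpace ℝ (Fin (n + 2)) → ℝ)
    (hb : ∃ C : ℝ, ∀ x, |f x| ≤ C) (hs : HasCompactSupport f)
    (g₀ : Matrix (Fin (n + 2)) (Fin (n + 2)) ℝ) (hg₀ : IsUnit g₀)
    (hcont : ∀ v ∈ Lat0 n, ContinuousAt f (matAct n g₀ v)) :
    ContinuousAt
      (fun g : Matrix (Fin (n + 2)) (Fin (n + 2)) ℝ =>
        ∑' v : ↑(Lat0 n), f (matAct n g v.1)) g₀ ∧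
    ∃ U : Set (Matrix (Fin (n + 2)) (Fin (n + 2)) ℝ), g₀ ∈ U ∧ IsOpen U ∧
      {v : ↑(Lat0 n) | ∃ g ∈ U, f (matAct n g v.1) ≠ 0}.Finite := by
  classical
  -- inverse of g₀
  obtain ⟨u, hu⟩ := hg₀
  set h : Matrix (Fin (n + 2)) (Fin (n + 2)) ℝ := ↑u⁻¹ with hh_def
  have hhg : h * g₀ = 1 := by rw [← hu]; exact u.inv_mul
  -- support radius
  obtain ⟨r, hr⟩ := hs.isCompact.isBounded.subset_closedBall 0
  set R : ℝ := max r 0 with hR_def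
  have hR0 : 0 ≤ R := le_max_right _ _
  have hrR : tsupport f ⊆ closedBall 0 R := hr.trans (closedBall_subset_closedBall (le_max_left _ _))
  set Ch : ℝ := frobN n h with hCh_def
  have hCh0 : 0 ≤ Ch := frobN_nonneg n h
  set ε : ℝ := 1 / (2 * (Ch + 1)) with hε_def
  have hε0 : 0 < ε := by positivity
  set B : ℝ := 2 * Ch * R + 1 with hB_def
  set U : Set (Matrix (Fin (n + 2)) (Fin (n + 2)) ℝ) := {g | frobN n (g₀ - g) < ε} with hU_def
  have hUopen : IsOpen U := by
    have : Continuous fun g : Matrix (Fin (n + 2)) (Fin (n + 2)) ℝ => frobN n (g₀ - g) :=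
      (frobN_continuous n).comp (continuous_const.sub continuous_id)
    exact isOpen_lt this continuous_const
  have hg₀U : g₀ ∈ U := by
    simp only [hU_def, Set.mem_setOf_eq, sub_self]
    have : frobN n (0 : Matrix (Fin (n + 2)) (Fin (n + 2)) ℝ) = 0 := by
      simp [frobN]
    rw [this]; exact hε0
  -- key claim
  have key : ∀ g ∈ U, ∀ x : EuclideanSpace ℝ (Fin (n + 2)), f (matAct n g x) ≠ 0 → ‖x‖ ≤ B := by
    intro g hg x hfx
    have hmem : matAct n g x ∈ tsupport f := subset_tsupport f hfx
    have hgx : ‖matAct n g x‖ ≤ R := by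
      have := hrR hmem
      rwa [mem_closedBall_zero_iff] at this
    have hx' : (x : Fin (n + 2) → ℝ) = h *ᵥ (g *ᵥ x) + h *ᵥ ((g₀ - g) *ᵥ x) := by
      rw [← Matrix.mulVec_add, ← Matrix.add_mulVec, add_sub_cancel, Matrix.mulVec_mulVec, hhg,
        Matrix.one_mulVec]
    have hx : x = matAct n h (matAct n g x) + matAct n h (matAct n (g₀ - g) x) := by
      ext i; simpa [matAct] using congrFun hx' i
    have h1 : ‖x‖ ≤ Ch * R + Ch * (ε * ‖x‖) := by
      calc ‖x‖ = ‖matAct n h (matAct n g x) + matAct n h (matAct n (g₀ - g) x)‖ := by rw [← hx]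
        _ ≤ ‖matAct n h (matAct n g x)‖ + ‖matAct n h (matAct n (g₀ - g) x)‖ := norm_add_le _ _
        _ ≤ Ch * ‖matAct n g x‖ + Ch * ‖matAct n (g₀ - g) x‖ := by
            gcongr <;> exact norm_matAct_le n h _
        _ ≤ Ch * R + Ch * (ε * ‖x‖) := by
            gcongr
            calc ‖matAct n (g₀ - g) x‖ ≤ frobN n (g₀ - g) * ‖x‖ := norm_matAct_le n _ _
              _ ≤ ε * ‖x‖ := by gcongr ?_ * ‖x‖; exact le_of_lt hg
    have hx0 : 0 ≤ ‖x‖ := norm_nonneg _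
    have hcε : Ch * ε ≤ 1 / 2 := by
      rw [hε_def, mul_one_div, div_le_div_iff₀ (by positivity) (by norm_num : (0:ℝ) < 2)]
      nlinarith
    nlinarith [mul_le_mul_of_nonneg_right hcε hx0]
  -- finite set of relevant lattice points
  have hS : {x : EuclideanSpace ℝ (Fin (n + 2)) |
      (∀ i, ∃ m : ℤ, x i = (m : ℝ)) ∧ ‖x‖ ≤ B}.Finite := finite_int_ball n B
  have hSv : {v : ↑(Lat0 n) | ∃ g ∈ U, f (matAct n g v.1) ≠ 0}.Finite := by
    apply Set.Finite.subset (hS.preimage (Subtype.val_injective.injOn))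
    rintro v ⟨g, hg, hne⟩
    exact ⟨v.2.2.1, key g hg v.1 hne⟩
  refine ⟨?_, U, hg₀U, hUopen, hSv⟩
  -- continuity
  set s : Finset ↑(Lat0 n) := hSv.toFinset with hs_def
  have hev : (fun g : Matrix (Fin (n + 2)) (Fin (n + 2)) ℝ =>
      ∑' v : ↑(Lat0 n), f (matAct n g v.1)) =ᶠ[𝓝 g₀]
      fun g => ∑ v ∈ s, f (matAct n g v.1) := by
    filter_upwards [hUopen.mem_nhds hg₀U] with g hg
    apply tsum_eq_sum
    intro v hv
    by_contra hne
    exact hv (by rw [hs_def, Set.Finite.mem_toFinset]; exact ⟨g, hg, hne⟩)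
  have hsum : ContinuousAt (fun g => ∑ v ∈ s, f (matAct n g v.1)) g₀ := by
    apply tendsto_finset_sum
    intro v _
    have hmv : Continuous fun g : Matrix (Fin (n + 2)) (Fin (n + 2)) ℝ => matAct n g v.1 := by
      have : Continuous fun g : Matrix (Fin (n + 2)) (Fin (n + 2)) ℝ => g *ᵥ (v.1 : Fin (n+2) → ℝ) :=
        continuous_id.matrix_mulVec continuous_const
      exact (PiLp.continuous_toLp 2 fun _ : Fin (n + 2) => ℝ).comp this
    exact Filter.Tendsto.comp (hcont v.1 v.2) hmv.continuousAt
  exact hsum.congr hev.symm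
end
end
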